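/- For every k ≥ 1, the kernel of the homogenization map 𝒫_k : P^{(k)} → P^k equals (H−1)·P^{(k−1)}, i.e. a polynomial f ∈ P^{(k)} satisfies 𝒫_k(f) = 0 if and only if f = (H−1)·g for some g ∈ P^{(k−1)}. -/

import Mathlib

open MvPolynomial

noncomputable section

/-- The polynomial ring `R = ℂ[z_1,…,z_n,ξ_1,…,ξ_n]`. -/
abbrev R (n : ℕ) := MvPolynomial (Fin n ⊕ Fin n) ℂ

/-- The variable `z_i`. -/
def z (n : ℕ) (i : Fin n) : R n := X (Sum.inl i)

/-- The variable `ξ_i`. -/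
def ξ (n : ℕ) (i : Fin n) : R n := X (Sum.inr i)

/-- `H = Σ_i z_i ξ_i`. -/
def H (n : ℕ) : R n := ∑ i, z n i * ξ n i

/-- The bidegree weight: `z`-variables have weight `(1,0)`, `ξ`-variables weight `(0,1)`. -/
def bw (n : ℕ) : Fin n ⊕ Fin n → ℕ × ℕ := Sum.elim (fun _ => (1, 0)) (fun _ => (0, 1))

/-- `P^k`: the span of the bidegree-`(k,k)` monomials. -/
def Phom (n k : ℕ) : Submodule ℂ (R n) := weightedHomogeneousSubmodule ℂ (bw n) (k, k)

/-- `P^{(k)} = ⊕_{j<k+1} P^j`; so `PfiltLT n (k+1)` is `P^{(k)}` and `PfiltLT n k` is `P^{(k-1)}`. -/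
def PfiltLT (n k : ℕ) : Submodule ℂ (R n) := ⨆ j ∈ Finset.range k, Phom n j

/-- The homogenization map `𝒫_k`, sending `Σ_{j≤k} f_j` (with `f_j ∈ P^j`) to `Σ_{j≤k} f_j H^{k-j}`. -/
def homog (n k : ℕ) (f : R n) : R n :=
  ∑ j ∈ Finset.range (k + 1), weightedHomogeneousComponent (bw n) (j, j) f * H n ^ (k - j)

/-- `H` is weighted homogeneous of bidegree `(1,1)`. -/
lemma H_hom (n : ℕ) : (H n).IsWeightedHomogeneous (bw n) (1, 1) := by
  apply IsWeightedHomogeneous.sum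
  intro i _
  have h1 := isWeightedHomogeneous_X ℂ (bw n) (Sum.inl i)
  have h2 := isWeightedHomogeneous_X ℂ (bw n) (Sum.inr i)
  have h := h1.mul h2
  have heq : bw n (Sum.inl i) + bw n (Sum.inr i) = ((1, 1) : ℕ × ℕ) := by
    simp [bw]
  rw [heq] at h
  exact h

/-- Powers of `H` are weighted homogeneous. -/
lemma Hpow_hom (n m : ℕ) : (H n ^ m).IsWeightedHomogeneous (bw n) (m, m) := by
  induction m with
  | zero => rw [pow_zero]; exact isWeightedHomogeneous_one ℂ (bw n)
  | succ m ih =>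
    have h := ih.mul (H_hom n)
    rw [← pow_succ] at h
    have heq : ((m, m) : ℕ × ℕ) + (1, 1) = (m + 1, m + 1) := by
      simp [Prod.ext_iff]
    rw [heq] at h
    exact h

/-- An element of `PfiltLT n m` is the sum of its weighted homogeneous components of
bidegrees `(j,j)` for `j < m`. -/
lemma sum_components (n m : ℕ) (f : R n) (hf : f ∈ PfiltLT n m) :
    ∑ j ∈ Finset.range m, weightedHomogeneousComponent (bw n) (j, j) f = f := by
  set L : R n →ₗ[ℂ] R n :=
    ∑ j ∈ Finset.range m, weightedHomogeneousComponent (bw n) (j, j) with hL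
  have key : PfiltLT n m ≤ LinearMap.ker (L - LinearMap.id) := by
    rw [PfiltLT]
    refine iSup₂_le fun j hj => fun p hp => ?_
    rw [Finset.mem_range] at hj
    rw [Phom, mem_weightedHomogeneousSubmodule] at hp
    rw [LinearMap.mem_ker, LinearMap.sub_apply, LinearMap.id_apply, sub_eq_zero, hL,
      LinearMap.sum_apply]
    rw [Finset.sum_eq_single j]
    · exact hp.weightedHomogeneousComponent_same
    · intro b _ hb
      exact hp.weightedHomogeneousComponent_ne (b, b)
        (by simp [Prod.ext_iff]; omega)
    · intro habs; exact absurd (Finset.mem_range.mpr hj) habs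
  have := key hf
  rw [LinearMap.mem_ker, LinearMap.sub_apply, LinearMap.id_apply, sub_eq_zero] at this
  simpa [hL, LinearMap.sum_apply] using this

/-- Telescoping identity. -/
lemma telescope {A : Type*} [CommRing A] (h : A) (a : ℕ → A) (k : ℕ) :
    (h - 1) * ∑ j ∈ Finset.range k, ∑ i ∈ Finset.range (j + 1), a i * h ^ (j - i)
      = ∑ i ∈ Finset.range k, a i * h ^ (k - i) - ∑ i ∈ Finset.range k, a i := by
  induction k with
  | zero => simp
  | succ k ih =>
    rw [Finset.sum_range_succ, mul_add, ih]
    have key : h * ∑ i ∈ Finset.range (k + 1), a i * h ^ (k - i)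
        = ∑ i ∈ Finset.range (k + 1), a i * h ^ (k + 1 - i) := by
      rw [Finset.mul_sum]
      refine Finset.sum_congr rfl fun i hi => ?_
      rw [Finset.mem_range] at hi
      rw [show k + 1 - i = (k - i) + 1 by omega, pow_succ]
      ring
    have e1 : ∑ i ∈ Finset.range (k + 1), a i * h ^ (k - i)
        = (∑ i ∈ Finset.range k, a i * h ^ (k - i)) + a k := by
      rw [Finset.sum_range_succ]; simp
    have e2 : ∑ i ∈ Finset.range (k + 1), a i = (∑ i ∈ Finset.range k, a i) + a k :=
      Finset.sum_range_succ _ _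
    linear_combination key - e1 + e2

/-- Membership of `Phom n j` in the filtration. -/
lemma Phom_le_PfiltLT (n j k : ℕ) (hj : j < k) : Phom n j ≤ PfiltLT n k := by
  rw [PfiltLT]
  exact le_iSup₂ (f := fun j (_ : j ∈ Finset.range k) => Phom n j) j
    (Finset.mem_range.mpr hj)

/-- For every `k ≥ 1`, the kernel of the homogenization map
`𝒫_k : P^{(k)} → P^k` equals `(H−1)·P^{(k−1)}`: a polynomial `f ∈ P^{(k)}` satisfies
`𝒫_k(f) = 0` if and only if `f = (H−1)·g` for some `g ∈ P^{(k−1)}`. -/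
theorem stmt_0 (n : ℕ) (hn : 1 ≤ n) (k : ℕ) (hk : 1 ≤ k)
    (f : R n) (hf : f ∈ PfiltLT n (k + 1)) :
    homog n k f = 0 ↔ ∃ g ∈ PfiltLT n k, f = (H n - 1) * g := by
  constructor
  · intro h0
    have hsum := sum_components n (k + 1) f hf
    set a : ℕ → R n := fun i => weightedHomogeneousComponent (bw n) (i, i) f with ha
    refine ⟨-(∑ j ∈ Finset.range k, ∑ i ∈ Finset.range (j + 1), a i * H n ^ (j - i)),
      ?_, ?_⟩
    · apply neg_mem
      apply Submodule.sum_mem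
      intro j hj
      rw [Finset.mem_range] at hj
      refine Phom_le_PfiltLT n j k hj ?_
      apply Submodule.sum_mem
      intro i hi
      rw [Finset.mem_range] at hi
      rw [Phom, mem_weightedHomogeneousSubmodule]
      have h1 : (a i).IsWeightedHomogeneous (bw n) (i, i) :=
        weightedHomogeneousComponent_isWeightedHomogeneous (i, i) f
      have h2 := h1.mul (Hpow_hom n (j - i))
      have heq : ((i, i) : ℕ × ℕ) + (j - i, j - i) = (j, j) := by
        simp only [Prod.mk_add_mk, Prod.mk.injEq]; omega
      rw [heq] at h2
      exact h2
    · rw [mul_neg, telescope]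
      rw [homog] at h0
      have e1 : ∑ i ∈ Finset.range (k + 1), a i * H n ^ (k - i)
          = (∑ i ∈ Finset.range k, a i * H n ^ (k - i)) + a k := by
        rw [Finset.sum_range_succ]; simp
      have e2 : ∑ i ∈ Finset.range (k + 1), a i = (∑ i ∈ Finset.range k, a i) + a k :=
        Finset.sum_range_succ _ _
      rw [e1] at h0
      rw [e2] at hsum
      linear_combination h0 - hsum
  · rintro ⟨g, hg, rfl⟩
    set L : R n →ₗ[ℂ] R n :=
      (∑ j ∈ Finset.range (k + 1),
        (LinearMap.mulRight ℂ (H n ^ (k - j))).comp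
          (weightedHomogeneousComponent (bw n) (j, j))).comp
        (LinearMap.mulLeft ℂ (H n - 1)) with hL
    have hLapp : ∀ p : R n, L p = homog n k ((H n - 1) * p) := by
      intro p
      simp [hL, homog, LinearMap.sum_apply]
    have key : PfiltLT n k ≤ LinearMap.ker L := by
      rw [PfiltLT]
      refine iSup₂_le fun j hj => fun p hp => ?_
      rw [Finset.mem_range] at hj
      rw [Phom, mem_weightedHomogeneousSubmodule] at hp
      rw [LinearMap.mem_ker, hLapp, homog]
      have hHp : (H n * p).IsWeightedHomogeneous (bw n) (j + 1, j + 1) := by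
        have h := (H_hom n).mul hp
        have heq : ((1, 1) : ℕ × ℕ) + (j, j) = (j + 1, j + 1) := by
          simp only [Prod.mk_add_mk, Prod.mk.injEq]; omega
        rw [heq] at h
        exact h
      have expand : (H n - 1) * p = H n * p - p := by ring
      rw [expand]
      simp only [map_sub, sub_mul]
      rw [Finset.sum_sub_distrib]
      have s1 : ∑ i ∈ Finset.range (k + 1),
          weightedHomogeneousComponent (bw n) (i, i) (H n * p) * H n ^ (k - i)
          = H n * p * H n ^ (k - (j + 1)) := by
        rw [Finset.sum_eq_single (j + 1)]
        · rw [hHp.weightedHomogeneousComponent_same]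
        · intro b _ hb
          rw [hHp.weightedHomogeneousComponent_ne (b, b)
            (by simp [Prod.ext_iff]; omega), zero_mul]
        · intro habs; exact absurd (Finset.mem_range.mpr (by omega)) habs
      have s2 : ∑ i ∈ Finset.range (k + 1),
          weightedHomogeneousComponent (bw n) (i, i) p * H n ^ (k - i)
          = p * H n ^ (k - j) := by
        rw [Finset.sum_eq_single j]
        · rw [hp.weightedHomogeneousComponent_same]
        · intro b _ hb
          rw [hp.weightedHomogeneousComponent_ne (b, b)
            (by simp [Prod.ext_iff]; omega), zero_mul]
        · intro habs; exact absurd (Finset.mem_range.mpr (by omega)) habs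
      rw [s1, s2]
      have hpow : H n * p * H n ^ (k - (j + 1)) = p * H n ^ (k - j) := by
        rw [show k - j = (k - (j + 1)) + 1 by omega, pow_succ]
        ring
      rw [hpow, sub_self]
    have := key hg
    rw [LinearMap.mem_ker, hLapp] at this
    exact this
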